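/- Let A be a real 2×2 matrix with positive definite symmetric part S and skew-symmetric part W = rJ where J = [[0,−1],[1,0]] and r ≠ 0. Define θ ∈ (0, π/2) by |r| = √(det S)·tan θ. Then A is n-monotone if and only if nθ ≤ π. -/

import Mathlib

open Matrix Real


noncomputable def wq (n : ℕ) (m : ℤ) : ℂ := Complex.exp (2 * Real.pi * Complex.I * m / n)

lemma wq_add (n : ℕ) (m1 m2 : ℤ) : wq n (m1 + m2) = wq n m1 * wq n m2 := by
  rw [wq, wq, wq, ← Complex.exp_add]
  congr 1
  push_cast
  ring

lemma wq_eq_one_iff (n : ℕ) (hn : 0 < n) (m : ℤ) : wq n m = 1 ↔ (n : ℤ) ∣ m := by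
  rw [wq, Complex.exp_eq_one_iff]
  constructor
  · rintro ⟨k, hk⟩
    refine ⟨k, ?_⟩
    have hn' : (n : ℂ) ≠ 0 := by exact_mod_cast hn.ne'
    have h2 : (2 * Real.pi * Complex.I : ℂ) ≠ 0 := by
      simp [Real.pi_ne_zero, Complex.I_ne_zero]
    field_simp at hk
    have : (m : ℂ) = k * n := by
      have h3 : (2 * (Real.pi:ℂ) * Complex.I) * m = (2 * (Real.pi:ℂ) * Complex.I) * (k * n) := by
        rw [hk]; ring
      exact mul_left_cancel₀ h2 h3
    have : (m : ℂ) = n * k := by rw [this]; ring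
    exact_mod_cast this
  · rintro ⟨k, rfl⟩
    refine ⟨k, ?_⟩
    have hn' : (n : ℂ) ≠ 0 := by exact_mod_cast hn.ne'
    field_simp
    push_cast
    ring

lemma wq_pow (n : ℕ) (m : ℤ) (k : ℕ) : wq n (m * k) = (wq n m) ^ k := by
  induction k with
  | zero => simp [wq]
  | succ k ih =>
    have : m * ((k:ℤ) + 1) = m * k + m := by ring
    push_cast
    rw [this, wq_add, ih, pow_succ]

lemma wq_orth (n : ℕ) (hn : 0 < n) (m : ℤ) :
    ∑ k : Fin n, wq n (m * k) = if (n : ℤ) ∣ m then (n : ℂ) else 0 := by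
  by_cases h : (n : ℤ) ∣ m
  · simp only [h, if_true]
    have : ∀ k : Fin n, wq n (m * k) = 1 := by
      intro k
      rw [wq_eq_one_iff n hn]
      exact Dvd.dvd.mul_right h _
    simp [this]
  · simp only [h, if_false]
    have hne : wq n m ≠ 1 := fun he => h ((wq_eq_one_iff n hn m).1 he)
    calc ∑ k : Fin n, wq n (m * k) = ∑ k ∈ Finset.range n, (wq n m) ^ k := by
          rw [show (fun k : Fin n => wq n (m * k)) = (fun k : Fin n => (wq n m) ^ (k:ℕ)) from funext fun k => wq_pow n m k]
          exact Fin.sum_univ_eq_sum_range _ n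
      _ = ((wq n m) ^ n - 1) / (wq n m - 1) := geom_sum_eq hne n
      _ = 0 := by
          rw [← wq_pow, (wq_eq_one_iff n hn (m * n)).2 ⟨m, by ring⟩]
          simp

lemma wq_conj (n : ℕ) (m : ℤ) : (starRingEnd ℂ) (wq n m) = wq n (-m) := by
  rw [wq, wq, ← Complex.exp_conj]
  congr 1
  simp [map_div₀, map_ofNat]

noncomputable def dftF (n : ℕ) (z : Fin n → ℂ) (k : Fin n) : ℂ :=
  ∑ j : Fin n, wq n (-(j : ℤ) * k) * z j

lemma dvd_sub_of_fin (n : ℕ) (hn : 0 < n) (j' δ : Fin n) :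
    (n : ℤ) ∣ ((((j' + δ) : Fin n) : ℤ) - (j' : ℤ) - (δ : ℤ)) := by
  have h : (((j' + δ) : Fin n) : ℕ) = ((j' : ℕ) + (δ : ℕ)) % n := Fin.val_add j' δ
  have h2 : (((j' : ℕ) + (δ : ℕ)) % n : ℤ) = ((j' : ℤ) + (δ : ℤ)) % (n : ℤ) := by
    push_cast; ring_nf
  refine ⟨-((((j' : ℤ) + (δ : ℤ)) / (n : ℤ))), ?_⟩
  rw [h] at *
  push_cast [h2]
  have := Int.emod_def ((j' : ℤ) + (δ : ℤ)) (n : ℤ)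
  linarith [this]

lemma dft_shift (n : ℕ) (hn : 0 < n) (z : Fin n → ℂ) (δ : Fin n) :
    ∑ k : Fin n, wq n (-(δ : ℤ) * k) * ((starRingEnd ℂ) (dftF n z k) * dftF n z k)
      = n * ∑ j : Fin n, (starRingEnd ℂ) (z (j + δ)) * z j := by
  have key : ∀ k j j' : Fin n,
      wq n (-(δ : ℤ) * k) * ((starRingEnd ℂ) (wq n (-(j : ℤ) * k) * z j) * (wq n (-(j' : ℤ) * k) * z j'))
        = wq n (((j : ℤ) - j' - δ) * k) * ((starRingEnd ℂ) (z j) * z j') := by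
    intro k j j'
    rw [_root_.map_mul, wq_conj]
    rw [show ((j : ℤ) - j' - δ) * k = (-(δ : ℤ) * k) + (-(-(j : ℤ) * k) + (-(j' : ℤ) * k)) by ring]
    rw [wq_add, wq_add]
    ring
  calc ∑ k : Fin n, wq n (-(δ : ℤ) * k) * ((starRingEnd ℂ) (dftF n z k) * dftF n z k)
      = ∑ k : Fin n, ∑ j : Fin n, ∑ j' : Fin n,
          wq n (((j : ℤ) - j' - δ) * k) * ((starRingEnd ℂ) (z j) * z j') := by
        refine Finset.sum_congr rfl fun k _ => ?_
        rw [dftF, map_sum, Finset.sum_mul_sum, Finset.mul_sum]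
        refine Finset.sum_congr rfl fun j _ => ?_
        rw [Finset.mul_sum]
        refine Finset.sum_congr rfl fun j' _ => ?_
        exact key k j j'
    _ = ∑ j : Fin n, ∑ j' : Fin n, ∑ k : Fin n,
          wq n (((j : ℤ) - j' - δ) * k) * ((starRingEnd ℂ) (z j) * z j') := by
        rw [Finset.sum_comm]
        refine Finset.sum_congr rfl fun j _ => Finset.sum_comm
    _ = ∑ j' : Fin n, ∑ j : Fin n,
          (if (n : ℤ) ∣ ((j : ℤ) - j' - δ) then (n : ℂ) else 0) * ((starRingEnd ℂ) (z j) * z j') := by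
        rw [Finset.sum_comm]
        refine Finset.sum_congr rfl fun j' _ => Finset.sum_congr rfl fun j _ => ?_
        rw [← Finset.sum_mul, wq_orth n hn]
    _ = ∑ j' : Fin n, (n : ℂ) * ((starRingEnd ℂ) (z (j' + δ)) * z j') := by
        refine Finset.sum_congr rfl fun j' _ => ?_
        rw [Finset.sum_eq_single (j' + δ)]
        · rw [if_pos (dvd_sub_of_fin n hn j' δ)]
        · intro j _ hj
          rw [if_neg, zero_mul]
          intro hdvd
          apply hj
          have h2 := dvd_sub_of_fin n hn j' δ
          have h3 : (n : ℤ) ∣ ((j : ℤ) - (((j' + δ) : Fin n) : ℤ)) := by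
            have := dvd_sub hdvd h2
            simpa using this
          have h4 : ((j : ℤ) - (((j' + δ) : Fin n) : ℤ)) = 0 := by
            refine Int.eq_zero_of_abs_lt_dvd h3 ?_
            have b1 : (j : ℤ) < n := by exact_mod_cast j.isLt
            have b2 : ((((j' + δ)) : Fin n) : ℤ) < n := by exact_mod_cast (j' + δ).isLt
            have b3 : 0 ≤ (j : ℤ) := Int.ofNat_nonneg _
            have b4 : 0 ≤ ((((j' + δ)) : Fin n) : ℤ) := Int.ofNat_nonneg _
            rw [abs_lt]; omega
          have : (j : ℤ) = (((j' + δ) : Fin n) : ℤ) := by omega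
          exact Fin.ext (by exact_mod_cast this)
        · intro h; exact absurd (Finset.mem_univ _) h
    _ = n * ∑ j : Fin n, (starRingEnd ℂ) (z (j + δ)) * z j := by
        rw [Finset.mul_sum]

lemma wq_zero (n : ℕ) : wq n 0 = 1 := by simp [wq]

lemma exp_mul_wq_re (n : ℕ) (θ : ℝ) (m : ℤ) :
    (Complex.exp (θ * Complex.I) * wq n m).re = Real.cos (θ + 2 * π * m / n) := by
  rw [wq, ← Complex.exp_add,
    show ((θ : ℂ) * Complex.I + 2 * (π : ℝ) * Complex.I * m / n)
      = ((θ + 2 * π * m / n : ℝ) : ℂ) * Complex.I by push_cast; ring]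
  exact Complex.exp_ofReal_mul_I_re _

lemma cos_bound (θ s : ℝ) (hθ0 : 0 < θ) (h1 : θ ≤ s) (h2 : s ≤ 2 * π - θ) :
    Real.cos s ≤ Real.cos θ := by
  rcases le_or_gt s π with h | h
  · exact Real.cos_le_cos_of_nonneg_of_le_pi hθ0.le h h1
  · rw [← Real.cos_two_pi_sub]
    exact Real.cos_le_cos_of_nonneg_of_le_pi hθ0.le (by linarith) (by linarith)

lemma rev_dir (n : ℕ) [NeZero n] (hn : 2 ≤ n) (θ : ℝ) (hθ0 : 0 < θ)
    (hπ : (n : ℝ) * θ ≤ π) (z : Fin n → ℂ) :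
    ∑ i : Fin n, (Complex.exp (θ * Complex.I) * ((starRingEnd ℂ) (z (i + 1)) * z i)).re
      ≤ Real.cos θ * ∑ i : Fin n, Complex.normSq (z i) := by
  have hn0 : 0 < n := by omega
  have hnR : (0 : ℝ) < n := by exact_mod_cast hn0
  set F := dftF n z with hF
  have h0 := dft_shift n hn0 z 0
  have h1 := dft_shift n hn0 z 1
  have hv1 : ((1 : Fin n) : ℕ) = 1 := by rw [Fin.val_one']; exact Nat.mod_eq_of_lt (by omega)
  simp only [Fin.val_zero, Int.ofNat_zero, neg_zero, zero_mul, wq_zero, one_mul, add_zero] at h0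
  -- h0 : ∑ k, conj (F k) * F k = n * ∑ j, conj (z j) * z j
  -- per-k cosine bound
  have hcos : ∀ k : Fin n,
      (Complex.exp (θ * Complex.I) * wq n (-((1 : Fin n) : ℤ) * k)).re ≤ Real.cos θ := by
    intro k
    rw [exp_mul_wq_re]
    rcases Nat.eq_zero_or_pos (k : ℕ) with hk | hk
    · rw [show (-((1 : Fin n) : ℤ) * (k : ℤ) : ℤ) = 0 by
        rw [show ((k : Fin n) : ℤ) = 0 from by exact_mod_cast hk]; ring]
      norm_num
    · have hkR : (1 : ℝ) ≤ (k : ℕ) := by exact_mod_cast hk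
      have hkU : ((k : ℕ) : ℝ) ≤ (n : ℝ) - 1 := by
        have h := k.isLt
        have h2 : ((k : ℕ) : ℝ) + 1 ≤ (n : ℝ) := by exact_mod_cast h
        linarith
      have e1 : θ + 2 * π * ((-((1 : Fin n) : ℤ) * (k : ℤ) : ℤ) : ℝ) / n
          = -(2 * π * ((k : ℕ) : ℝ) / n - θ) := by
        have h5 : (((1 : Fin n) : ℕ) : ℝ) = 1 := by rw [hv1]; norm_num
        push_cast
        rw [h5]; ring
      rw [e1, Real.cos_neg]
      apply cos_bound θ _ hθ0
      · rw [le_sub_iff_add_le, le_div_iff₀ hnR]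
        nlinarith [Real.pi_pos]
      · have hb : 2 * π * ((k : ℕ) : ℝ) / n ≤ 2 * π := by
          rw [div_le_iff₀ hnR]
          nlinarith [Real.pi_pos]
        linarith
  -- now assemble
  have hA : ∑ i : Fin n, (Complex.exp (θ * Complex.I) * ((starRingEnd ℂ) (z (i + 1)) * z i)).re
      = (Complex.exp (θ * Complex.I) * ∑ i : Fin n, (starRingEnd ℂ) (z (i + 1)) * z i).re := by
    rw [Finset.mul_sum, Complex.re_sum]
  have hB : ∑ i : Fin n, Complex.normSq (z i)
      = (∑ i : Fin n, (starRingEnd ℂ) (z i) * z i).re := by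
    rw [Complex.re_sum]
    refine Finset.sum_congr rfl fun i _ => ?_
    rw [← Complex.normSq_eq_conj_mul_self]
    simp
  rw [hA, hB, ← mul_le_mul_iff_right₀ hnR]
  have hmulre : ∀ w : ℂ, (n : ℝ) * w.re = (((n : ℕ) : ℂ) * w).re := by
    intro w; simp [Complex.mul_re]
  have hpt : ∀ (w : ℂ) (t : ℝ), (w * (t : ℂ)).re = w.re * t := by
    intro w t; simp [Complex.mul_re]
  calc (n : ℝ) * (Complex.exp (θ * Complex.I) * ∑ i : Fin n, (starRingEnd ℂ) (z (i + 1)) * z i).re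
      = (Complex.exp (θ * Complex.I) * (((n : ℕ) : ℂ) * ∑ i : Fin n, (starRingEnd ℂ) (z (i + 1)) * z i)).re := by
        rw [hmulre]; exact congrArg Complex.re (by ring)
    _ = (Complex.exp (θ * Complex.I) * ∑ k : Fin n, wq n (-((1 : Fin n) : ℤ) * k) * ((starRingEnd ℂ) (dftF n z k) * dftF n z k)).re := by
        rw [← h1]
    _ = ∑ k : Fin n, (Complex.exp (θ * Complex.I) * (wq n (-((1 : Fin n) : ℤ) * k) * ((starRingEnd ℂ) (dftF n z k) * dftF n z k))).re := by
        rw [Finset.mul_sum, Complex.re_sum]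
    _ ≤ ∑ k : Fin n, Real.cos θ * ((starRingEnd ℂ) (dftF n z k) * dftF n z k).re := by
        refine Finset.sum_le_sum fun k _ => ?_
        have hr : (starRingEnd ℂ) (dftF n z k) * dftF n z k
            = ((Complex.normSq (dftF n z k) : ℝ) : ℂ) :=
          Complex.normSq_eq_conj_mul_self.symm
        rw [hr, ← mul_assoc, hpt, Complex.ofReal_re]
        exact mul_le_mul_of_nonneg_right (hcos k) (Complex.normSq_nonneg _)
    _ = Real.cos θ * (∑ k : Fin n, (starRingEnd ℂ) (dftF n z k) * dftF n z k).re := by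
        rw [Complex.re_sum, Finset.mul_sum]
    _ = Real.cos θ * ((((n : ℕ) : ℂ)) * ∑ i : Fin n, (starRingEnd ℂ) (z i) * z i).re := by
        rw [h0]
    _ = (n : ℝ) * (Real.cos θ * (∑ i : Fin n, (starRingEnd ℂ) (z i) * z i).re) := by
        rw [← hmulre]; ring

lemma wq_congr (n : ℕ) (hn : 0 < n) (m m' : ℤ) (h : (n : ℤ) ∣ (m - m')) : wq n m = wq n m' := by
  obtain ⟨c, hc⟩ := h
  rw [show m = m' + n * c by linarith, wq_add,
    (wq_eq_one_iff n hn (n * c)).2 ⟨c, rfl⟩, mul_one]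

lemma wq_normSq (n : ℕ) (m : ℤ) : Complex.normSq (wq n m) = 1 := by
  have h : (Complex.normSq (wq n m) : ℂ) = 1 := by
    rw [Complex.normSq_eq_conj_mul_self, wq_conj, ← wq_add, show -m + m = 0 by ring, wq_zero]
  exact_mod_cast h

lemma fwd_dir (n : ℕ) [NeZero n] (hn : 2 ≤ n) (θ : ℝ) (hθ0 : 0 < θ) (hθ1 : θ < π / 2)
    (h : ∀ z : Fin n → ℂ,
      ∑ i : Fin n, (Complex.exp (θ * Complex.I) * ((starRingEnd ℂ) (z (i + 1)) * z i)).re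
        ≤ Real.cos θ * ∑ i : Fin n, Complex.normSq (z i)) :
    (n : ℝ) * θ ≤ π := by
  by_contra hlt
  push_neg at hlt
  have hn0 : 0 < n := by omega
  have hnR : (0 : ℝ) < n := by exact_mod_cast hn0
  have hv1 : ((1 : Fin n) : ℕ) = 1 := by rw [Fin.val_one']; exact Nat.mod_eq_of_lt (by omega)
  have hz := h (fun j => wq n ((j : ℕ) : ℤ))
  try simp only at hz
  have hterm : ∀ i : Fin n,
      (Complex.exp (θ * Complex.I) *
        ((starRingEnd ℂ) (wq n (((i + 1 : Fin n) : ℕ) : ℤ)) * wq n ((i : ℕ) : ℤ))).re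
        = Real.cos (θ - 2 * π / n) := by
    intro i
    rw [wq_conj, ← wq_add]
    rw [wq_congr n hn0 _ (-1) ?_]
    · rw [exp_mul_wq_re]
      congr 1
      push_cast
      ring
    · obtain ⟨c, hc⟩ := dvd_sub_of_fin n hn0 i 1
      refine ⟨-c, ?_⟩
      have h1 : ((1 : Fin n) : ℤ) = 1 := by exact_mod_cast hv1
      rw [h1] at hc
      push_cast
      push_cast at hc
      linarith
  have hsum : ∑ i : Fin n,
      (Complex.exp (θ * Complex.I) *
        ((starRingEnd ℂ) (wq n (((i + 1 : Fin n) : ℕ) : ℤ)) * wq n ((i : ℕ) : ℤ))).re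
      = (n : ℝ) * Real.cos (θ - 2 * π / n) := by
    rw [Finset.sum_congr rfl fun i _ => hterm i, Finset.sum_const, Finset.card_univ,
      Fintype.card_fin, nsmul_eq_mul]
  rw [hsum] at hz
  have hnorm : ∑ i : Fin n, Complex.normSq (wq n ((i : ℕ) : ℤ)) = (n : ℝ) := by
    simp [wq_normSq]
  rw [hnorm] at hz
  -- hz : n * cos (θ - 2π/n) ≤ cos θ * n
  have hkey : Real.cos (θ - 2 * π / n) ≤ Real.cos θ := by
    have := hz
    nlinarith
  have habs : |θ - 2 * π / n| < θ := by
    rw [abs_lt]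
    constructor
    · have : 2 * π / n < 2 * θ := by rw [div_lt_iff₀ hnR]; nlinarith
      linarith
    · have : 0 < 2 * π / n := by positivity
      linarith
  have hcontra : Real.cos θ < Real.cos (θ - 2 * π / n) := by
    rw [← Real.cos_abs (θ - 2 * π / n)]
    exact Real.cos_lt_cos_of_nonneg_of_le_pi (abs_nonneg _) (by linarith [Real.pi_pos]) habs
  linarith

lemma form_calc (a b c r sa sd ct st : ℝ) (hsa : sa ^ 2 = a) (hc : c = (sd ^ 2 + b ^ 2) / sa ^ 2)
    (hsa0 : sa ≠ 0) (hsd0 : sd ≠ 0) (hct : ct ≠ 0) (ε : ℝ) (hε : ε = 1 ∨ ε = -1)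
    (hrt : ε * (r * ct) = sd * st) (x0 x1 y0 y1 : ℝ) :
    (x0 / sa - b * (ε * x1) / (sa * sd)) * (a * (y0 / sa - b * (ε * y1) / (sa * sd)) + (b - r) * (sa * (ε * y1) / sd))
      + (sa * (ε * x1) / sd) * ((b + r) * (y0 / sa - b * (ε * y1) / (sa * sd)) + c * (sa * (ε * y1) / sd))
      = (1 / ct) * (ct * (x0 * y0 + x1 * y1) - st * (x0 * y1 - x1 * y0)) := by
  subst hsa hc
  rcases hε with h | h <;> subst h
  · have hr : r = sd * st / ct := by
      field_simp
      linarith [hrt]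
    subst hr
    field_simp
    ring
  · have hr : r = -(sd * st / ct) := by
      field_simp
      linarith [hrt]
    subst hr
    field_simp
    ring

set_option maxHeartbeats 1000000 in
/-- Let `A` be a real `2×2` matrix with positive definite symmetric part `S`
and skew part `W = rJ`, `r ≠ 0`, where `J = [[0,−1],[1,0]]`. With `θ ∈ (0, π/2)` defined by
`|r| = √(det S)·tan θ`, the matrix `A` is `n`-monotone iff `nθ ≤ π`. -/
theorem stmt11 (A S : Matrix (Fin 2) (Fin 2) ℝ) (r : ℝ) (hr : r ≠ 0)
    (hS : S = (1/2 : ℝ) • (A + Aᵀ)) (hSpd : S.PosDef)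
    (hW : (1/2 : ℝ) • (A - Aᵀ) = r • !![0, -1; 1, 0])
    (θ : ℝ) (hθ : θ ∈ Set.Ioo 0 (π/2)) (htan : |r| = Real.sqrt S.det * Real.tan θ)
    (n : ℕ) (hn : 2 ≤ n) :
    haveI : NeZero n := ⟨by omega⟩
    ((∀ x : Fin n → (Fin 2 → ℝ),
        ∑ i : Fin n, (x (i + 1) - x i) ⬝ᵥ A.mulVec (x i) ≤ 0) ↔ n * θ ≤ π) := by
  haveI : NeZero n := ⟨by omega⟩
  obtain ⟨hθ0, hθ1⟩ := hθ
  have hsym : S 1 0 = S 0 1 := by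
    rw [hS]; simp [Matrix.add_apply, Matrix.smul_apply, Matrix.transpose_apply]; ring
  have hA : A = S + r • !![0, -1; 1, 0] := by
    rw [hS, ← hW]; module
  set a := S 0 0 with ha_def
  set b := S 0 1 with hb_def
  set c := S 1 1 with hc_def
  have hA00 : A 0 0 = a := by rw [hA]; simp [ha_def]
  have hA01 : A 0 1 = b - r := by rw [hA]; simp [Matrix.add_apply]; ring
  have hA10 : A 1 0 = b + r := by rw [hA]; simp [Matrix.add_apply, hsym]
  have hA11 : A 1 1 = c := by rw [hA]; simp [hc_def]
  have ha : 0 < a := by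
    have h2 := hSpd.dotProduct_mulVec_pos (x := ![1, 0]) (by
      intro h
      have := congrFun h 0
      simp at this)
    simpa [dotProduct, Matrix.mulVec, Fin.sum_univ_two] using h2
  have hd : 0 < S.det := hSpd.det_pos
  have hdet : S.det = a * c - b ^ 2 := by rw [Matrix.det_fin_two, hsym]; ring
  set sa := Real.sqrt a with hsa_def
  have hsa0 : 0 < sa := Real.sqrt_pos.2 ha
  have hsa : sa ^ 2 = a := Real.sq_sqrt ha.le
  set sd := Real.sqrt S.det with hsd_def
  have hsd0 : 0 < sd := Real.sqrt_pos.2 hd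
  have hsd : sd ^ 2 = a * c - b ^ 2 := by rw [hsd_def, Real.sq_sqrt hd.le, hdet]
  have hct : 0 < Real.cos θ := Real.cos_pos_of_mem_Ioo ⟨by linarith [Real.pi_pos], hθ1⟩
  obtain ⟨ε, hε1, hεr⟩ : ∃ ε : ℝ, (ε = 1 ∨ ε = -1) ∧ ε * r = |r| := by
    rcases lt_trichotomy r 0 with h | h | h
    · exact ⟨-1, Or.inr rfl, by rw [abs_of_neg h]; ring⟩
    · exact absurd h hr
    · exact ⟨1, Or.inl rfl, by rw [abs_of_pos h]; ring⟩
  have hrt : ε * (r * Real.cos θ) = sd * Real.sin θ := by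
    have h1 : ε * r = sd * Real.tan θ := by rw [hεr, htan]
    rw [Real.tan_eq_sin_div_cos] at h1
    field_simp at h1
    linarith [h1]
  have hcc : c = (sd ^ 2 + b ^ 2) / sa ^ 2 := by
    rw [hsd, hsa]; field_simp; ring
  set Φ : ℂ → (Fin 2 → ℝ) :=
    fun w => ![w.re / sa - b * (ε * w.im) / (sa * sd), sa * (ε * w.im) / sd] with hΦ
  have hkey : ∀ u v : ℂ, (Φ u) ⬝ᵥ A.mulVec (Φ v)
      = (1 / Real.cos θ) *
        (Complex.exp (θ * Complex.I) * ((starRingEnd ℂ) u * v)).re := by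
    intro u v
    have hre : (Complex.exp (θ * Complex.I) * ((starRingEnd ℂ) u * v)).re
        = Real.cos θ * (u.re * v.re + u.im * v.im)
          - Real.sin θ * (u.re * v.im - u.im * v.re) := by
      rw [Complex.mul_re, Complex.exp_ofReal_mul_I_re, Complex.exp_ofReal_mul_I_im,
        Complex.mul_re, Complex.mul_im, Complex.conj_re, Complex.conj_im]
      ring
    rw [hre, hΦ]
    simp only [dotProduct, Matrix.mulVec, Fin.sum_univ_two, Matrix.cons_val_zero,
      Matrix.cons_val_one, Matrix.head_cons, hA00, hA01, hA10, hA11]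
    exact form_calc a b c r sa sd (Real.cos θ) (Real.sin θ) hsa hcc hsa0.ne' hsd0.ne'
      hct.ne' ε hε1 hrt u.re u.im v.re v.im
  have hε2 : ε * ε = 1 := by rcases hε1 with h | h <;> rw [h] <;> norm_num
  have hsurj : ∀ v : Fin 2 → ℝ, Φ ((sa * v 0 + b * v 1 / sa : ℝ) + (ε * sd * v 1 / sa : ℝ) * Complex.I) = v := by
    intro v
    funext i
    fin_cases i
    · simp only [hΦ, Complex.add_re, Complex.add_im, Complex.ofReal_re, Complex.ofReal_im,
        Complex.mul_re, Complex.mul_im, Complex.I_re, Complex.I_im, Matrix.cons_val_zero, Fin.zero_eta]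
      field_simp
      linear_combination (-(sd * b * v 1)) * hε2
    · simp only [hΦ, Complex.add_re, Complex.add_im, Complex.ofReal_re, Complex.ofReal_im,
        Complex.mul_re, Complex.mul_im, Complex.I_re, Complex.I_im, Matrix.cons_val_one,
        Matrix.head_cons, Fin.mk_one, Matrix.cons_val_zero]
      field_simp
      linear_combination (sd * v 1) * hε2
  have hpt : ∀ (w : ℂ) (t : ℝ), (w * (t : ℂ)).re = w.re * t := by
    intro w t; simp [Complex.mul_re]
  have hmain : ∀ z : Fin n → ℂ,
      ∑ i : Fin n, (Φ (z (i + 1)) - Φ (z i)) ⬝ᵥ A.mulVec (Φ (z i))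
        = (1 / Real.cos θ) *
          ((∑ i : Fin n, (Complex.exp (θ * Complex.I) * ((starRingEnd ℂ) (z (i + 1)) * z i)).re)
            - Real.cos θ * ∑ i : Fin n, Complex.normSq (z i)) := by
    intro z
    have h1 : ∀ i : Fin n, (Φ (z (i + 1)) - Φ (z i)) ⬝ᵥ A.mulVec (Φ (z i))
        = (1 / Real.cos θ) *
            (Complex.exp (θ * Complex.I) * ((starRingEnd ℂ) (z (i + 1)) * z i)).re
          - Complex.normSq (z i) := by
      intro i
      rw [sub_dotProduct, hkey, hkey]
      have h2 : (Complex.exp (θ * Complex.I) * ((starRingEnd ℂ) (z i) * z i)).re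
          = Real.cos θ * Complex.normSq (z i) := by
        rw [show (starRingEnd ℂ) (z i) * z i = ((Complex.normSq (z i) : ℝ) : ℂ) from
          Complex.normSq_eq_conj_mul_self.symm, hpt, Complex.exp_ofReal_mul_I_re]
      rw [h2]
      field_simp
    rw [Finset.sum_congr rfl fun i _ => h1 i, Finset.sum_sub_distrib, ← Finset.mul_sum]
    field_simp
  constructor
  · intro hP
    apply fwd_dir n hn θ hθ0 hθ1
    intro z
    have h3 := hP (fun i => Φ (z i))
    try simp only at h3
    rw [hmain z] at h3
    have h8 := mul_le_mul_of_nonneg_left h3 hct.le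
    rw [← mul_assoc, mul_one_div, div_self hct.ne', one_mul] at h8
    simpa using h8
    
  · intro hle x
    let z : Fin n → ℂ := fun i =>
      ((sa * x i 0 + b * x i 1 / sa : ℝ) + (ε * sd * x i 1 / sa : ℝ) * Complex.I)
    have hx : ∀ i, x i = Φ (z i) := fun i => (hsurj (x i)).symm
    have h4 : ∑ i : Fin n, (x (i + 1) - x i) ⬝ᵥ A.mulVec (x i)
        = ∑ i : Fin n, (Φ (z (i + 1)) - Φ (z i)) ⬝ᵥ A.mulVec (Φ (z i)) := by
      refine Finset.sum_congr rfl fun i _ => ?_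
      rw [hx (i + 1), hx i]
    rw [h4, hmain z]
    have h5 := rev_dir n hn θ hθ0 (by push_cast; linarith) z
    have h6 : (∑ i : Fin n, (Complex.exp (θ * Complex.I) * ((starRingEnd ℂ) (z (i + 1)) * z i)).re)
        - Real.cos θ * ∑ i : Fin n, Complex.normSq (z i) ≤ 0 := by linarith
    exact mul_nonpos_of_nonneg_of_nonpos (by positivity) h6
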